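/- Let G be a graph of order n with vertex set V = {1,…,n}, let x ∈ V and let t ≥ 2 be an integer. Then (i) the number of vertices of S(G,t) ending in the letter x that have degree d(x) in S(G,t) equals n^{t−1} − d(x)ψ(t−1), and (ii) the number of vertices of S(G,t) ending in the letter x that have degree d(x)+1 in S(G,t) equals d(x)ψ(t−1). -/

import Mathlib

open Finset

/-- The generalized Sierpiński graph `S(G,t)` on words of length `t` over the vertex set. -/
def sierpinskiGraph {V : Type*} (G : SimpleGraph V) (t : ℕ) :
    SimpleGraph (Fin t → V) where
  Adj u v := ∃ i : Fin t, (∀ j, j < i → u j = v j) ∧ u i ≠ v i ∧ G.Adj (u i) (v i) ∧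
      ∀ j, i < j → u j = v i ∧ v j = u i
  symm := by
    refine ⟨?_⟩
    rintro u v ⟨i, h1, h2, h3, h4⟩
    exact ⟨i, fun j hj => (h1 j hj).symm, fun h => h2 h.symm, h3.symm,
      fun j hj => ⟨(h4 j hj).2, (h4 j hj).1⟩⟩
  loopless := by
    refine ⟨?_⟩
    rintro u ⟨i, _, h2, _⟩
    exact h2 rfl

instance {V : Type*} [Fintype V] [DecidableEq V] (G : SimpleGraph V) [DecidableRel G.Adj]
    (t : ℕ) : DecidableRel (sierpinskiGraph G t).Adj := fun u v =>
  inferInstanceAs (Decidable (∃ i : Fin t, (∀ j, j < i → u j = v j) ∧ u i ≠ v i ∧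
    G.Adj (u i) (v i) ∧ ∀ j, i < j → u j = v i ∧ v j = u i))

/-- The general Randić index `R_α`. -/
noncomputable def randic {V : Type*} [Fintype V] (G : SimpleGraph V) (α : ℝ) : ℝ := by
  classical
  exact ∑ e ∈ G.edgeFinset,
    Sym2.lift ⟨fun u v => ((G.degree u : ℝ) * (G.degree v : ℝ)) ^ α,
      fun u v => by dsimp only; rw [mul_comm]⟩ e

/-- `τ(x,y)`: the number of triangles containing the adjacent vertices `x` and `y`. -/
def tau {V : Type*} [Fintype V] [DecidableEq V] (G : SimpleGraph V) [DecidableRel G.Adj]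
    (x y : V) : ℕ := (G.neighborFinset x ∩ G.neighborFinset y).card

lemma tau_comm {V : Type*} [Fintype V] [DecidableEq V] (G : SimpleGraph V) [DecidableRel G.Adj]
    (x y : V) : tau G x y = tau G y x := by
  simp [tau, Finset.inter_comm]

/-- `ψ(t) = 1 + n + ⋯ + n^{t-1}`. -/
def psi (n t : ℕ) : ℕ := ∑ i ∈ Finset.range t, n ^ i

/-- `τ(G)`: the number of triangles of `G`. -/
noncomputable def triangleCount {V : Type*} [Fintype V] (G : SimpleGraph V) : ℕ := by
  classical exact (G.cliqueFinset 3).card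

section Aux

variable {n : ℕ} (G : SimpleGraph (Fin n)) [DecidableRel G.Adj] (x : Fin n)

/-- `i` is a good index for the word `u`: the suffix after `i` is all `x`
(including the last letter) and `u i` is adjacent to `x`. -/
abbrev goodIdx {t : ℕ} (u : Fin t → Fin n) (i : Fin t) : Prop :=
  (i : ℕ) < t - 1 ∧ (∀ j, i < j → u j = x) ∧ G.Adj (u i) x

lemma goodIdx_unique {t : ℕ} {u : Fin t → Fin n} {i i' : Fin t}
    (h : goodIdx G x u i) (h' : goodIdx G x u i') : i = i' := by
  by_contra hne
  rcases lt_or_gt_of_ne hne with hlt | hlt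
  · exact G.loopless.irrefl x ((h.2.1 i' hlt) ▸ h'.2.2)
  · exact G.loopless.irrefl x ((h'.2.1 i hlt) ▸ h.2.2)

lemma sier_adj_iff {t : ℕ} (ht : 2 ≤ t) (u v : Fin t → Fin n)
    (hu : u ⟨t - 1, Nat.sub_lt (by omega) Nat.one_pos⟩ = x) :
    (sierpinskiGraph G t).Adj u v ↔
      ((∀ j, j ≠ (⟨t - 1, Nat.sub_lt (by omega) Nat.one_pos⟩ : Fin t) → v j = u j) ∧ G.Adj x (v ⟨t - 1, Nat.sub_lt (by omega) Nat.one_pos⟩)) ∨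
      (∃ i : Fin t, goodIdx G x u i ∧
        ∀ j : Fin t, v j = if (j : ℕ) < i then u j else if j = i then x else u i) := by
  set last : Fin t := ⟨t - 1, by omega⟩ with hlastdef
  have hlastval : (last : ℕ) = t - 1 := rfl
  have hne_lt : ∀ j : Fin t, j ≠ last → j < last := by
    intro j hj
    have : (j : ℕ) ≠ t - 1 := fun h => hj (Fin.ext h)
    have hjt : (j : ℕ) < t := j.isLt
    exact Fin.lt_def.mpr (by omega)
  constructor
  · rintro ⟨i, h1, h2, h3, h4⟩
    by_cases hi : i = last
    · subst hi
      refine Or.inl ⟨fun j hj => (h1 j (hne_lt j hj)).symm, ?_⟩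
      rwa [← hu]
    · have hil : i < last := hne_lt i hi
      have hvi : v i = x := by
        have := (h4 last hil).1
        rw [hu] at this; exact this.symm
      refine Or.inr ⟨i, ⟨by have h1 := Fin.lt_def.mp hil; omega,
        fun j hj => by rw [(h4 j hj).1, hvi], by rwa [hvi] at h3⟩, ?_⟩
      intro j
      rcases lt_trichotomy j i with hj | hj | hj
      · simp [Fin.lt_def.mp hj, Fin.ne_of_lt hj, h1 j hj]
      · subst hj; simp [hvi]
      · have : ¬ (j : ℕ) < (i : ℕ) := by have := Fin.lt_def.mp hj; omega
        simp [this, Fin.ne_of_gt hj, (h4 j hj).2]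
  · rintro (⟨hQ, hadj⟩ | ⟨i, ⟨hi1, hi2, hi3⟩, hv⟩)
    · refine ⟨last, fun j hj => (hQ j (Fin.ne_of_lt hj)).symm, ?_, ?_, ?_⟩
      · rw [hu]; exact fun h => (G.ne_of_adj hadj) h
      · rw [hu]; exact hadj
      · intro j hj
        have h1 := Fin.lt_def.mp hj
        have h2 : (j : ℕ) < t := j.isLt
        omega
    · have hvi : v i = x := by rw [hv i]; simp
      refine ⟨i, ?_, ?_, ?_, ?_⟩
      · intro j hj; rw [hv j]; simp [Fin.lt_def.mp hj]
      · rw [hvi]; exact G.ne_of_adj hi3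
      · rw [hvi]; exact hi3
      · intro j hj
        have h1 : ¬ (j : ℕ) < (i : ℕ) := by have := Fin.lt_def.mp hj; omega
        refine ⟨by rw [hi2 j hj, hvi], ?_⟩
        rw [hv j]; simp [h1, Fin.ne_of_gt hj]

lemma sier_degree {t : ℕ} (ht : 2 ≤ t) (u : Fin t → Fin n)
    (hu : u ⟨t - 1, Nat.sub_lt (by omega) Nat.one_pos⟩ = x) :
    (sierpinskiGraph G t).degree u =
      G.degree x + if ∃ i, goodIdx G x u i then 1 else 0 := by
  classical
  set last : Fin t := ⟨t - 1, by omega⟩ with hlastdef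
  have hlastval : (last : ℕ) = t - 1 := rfl
  set Q : (Fin t → Fin n) → Prop := fun v => ∀ j, j ≠ last → v j = u j with hQdef
  set N := (sierpinskiGraph G t).neighborFinset u with hN
  have hmem : ∀ v, v ∈ N ↔ (sierpinskiGraph G t).Adj u v := fun v =>
    SimpleGraph.mem_neighborFinset _ _ _
  have claim1 : (N.filter Q).card = G.degree x := by
    refine Finset.card_bij' (fun v _ => v last) (fun y _ => Function.update u last y)
      ?_ ?_ ?_ ?_
    · intro v hv
      rw [Finset.mem_filter, hmem] at hv
      obtain ⟨hadj, hq⟩ := hv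
      rcases (sier_adj_iff G x ht u v hu).mp hadj with ⟨_, h2⟩ | ⟨i, hi, hv'⟩
      · rw [SimpleGraph.mem_neighborFinset]; exact h2
      · exfalso
        have hine : i ≠ last := by
          intro h; rw [h] at hi; have := hi.1; omega
        have hvi : v i = x := by rw [hv' i]; simp
        have := hq i hine
        rw [hvi] at this
        exact G.ne_of_adj hi.2.2 this.symm
    · intro y hy
      rw [SimpleGraph.mem_neighborFinset] at hy
      rw [Finset.mem_filter, hmem]
      constructor
      · rw [sier_adj_iff G x ht _ _ hu]
        refine Or.inl ⟨fun j hj => Function.update_of_ne hj _ _, ?_⟩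
        show G.Adj x (Function.update u last y last)
        simp only [Function.update_self]; exact hy
      · intro j hj; exact Function.update_of_ne hj _ _
    · intro v hv
      rw [Finset.mem_filter] at hv
      funext j
      by_cases hj : j = last
      · subst hj; simp
      · simp only [Function.update_of_ne hj]
        exact (hv.2 j hj).symm
    · intro y _; simp
  have claim2 : (N.filter (fun v => ¬ Q v)).card
      = if ∃ i, goodIdx G x u i then 1 else 0 := by
    by_cases hP : ∃ i, goodIdx G x u i
    · rw [if_pos hP]
      obtain ⟨i, hi⟩ := hP
      rw [Finset.card_eq_one]
      refine ⟨fun j => if (j : ℕ) < i then u j else if j = i then x else u i, ?_⟩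
      rw [Finset.eq_singleton_iff_unique_mem]
      constructor
      · rw [Finset.mem_filter, hmem]
        have hine : i ≠ last := by
          intro h; rw [h] at hi; have := hi.1; omega
        constructor
        · rw [sier_adj_iff G x ht _ _ hu]
          exact Or.inr ⟨i, hi, fun j => rfl⟩
        · intro hq
          have := hq i hine
          simp only [lt_irrefl, if_neg (lt_irrefl (i : ℕ)), if_pos rfl] at this
          exact G.ne_of_adj hi.2.2 this.symm
      · intro v hv
        rw [Finset.mem_filter, hmem] at hv
        rcases (sier_adj_iff G x ht u v hu).mp hv.1 with ⟨h1, _⟩ | ⟨i', hi', hv'⟩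
        · exact absurd h1 hv.2
        · obtain rfl := goodIdx_unique G x hi' hi
          funext j; exact hv' j
    · rw [if_neg hP, Finset.card_eq_zero]
      rw [Finset.eq_empty_iff_forall_notMem]
      intro v hv
      rw [Finset.mem_filter, hmem] at hv
      rcases (sier_adj_iff G x ht u v hu).mp hv.1 with ⟨h1, _⟩ | ⟨i', hi', _⟩
      · exact hv.2 h1
      · exact hP ⟨i', hi'⟩
  have h3 := Finset.card_filter_add_card_filter_not (s := N) Q
  rw [claim1, claim2] at h3
  have h4 := (sierpinskiGraph G t).card_neighborFinset_eq_degree u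
  rw [← hN] at h4
  omega

lemma card_last {t : ℕ} (ht : 2 ≤ t) (hlt : t - 1 < t) :
    (univ.filter fun u : Fin t → Fin n => u ⟨t - 1, hlt⟩ = x).card = n ^ (t - 1) := by
  classical
  set last : Fin t := ⟨t - 1, hlt⟩ with hlastdef
  have heq : (univ.filter fun u : Fin t → Fin n => u last = x)
      = Fintype.piFinset (fun j => if j = last then ({x} : Finset (Fin n)) else univ) := by
    ext u
    simp only [Finset.mem_filter, Finset.mem_univ, true_and, Fintype.mem_piFinset]
    constructor
    · intro h j
      by_cases hj : j = last
      · subst hj; simp [h]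
      · simp [hj]
    · intro h
      have := h last
      simpa using this
  rw [heq, Fintype.card_piFinset]
  rw [← Finset.mul_prod_erase univ _ (Finset.mem_univ last)]
  simp only [if_pos rfl, Finset.card_singleton, one_mul]
  have h1 : ∀ j ∈ univ.erase last,
      ((if j = last then ({x} : Finset (Fin n)) else univ).card) = n := by
    intro j hj
    rw [if_neg (Finset.ne_of_mem_erase hj)]
    simp
  rw [Finset.prod_congr rfl h1, Finset.prod_const,
    Finset.card_erase_of_mem (Finset.mem_univ _), Finset.card_univ, Fintype.card_fin]
  simp

lemma card_good {t : ℕ} (ht : 2 ≤ t) (hlt : t - 1 < t) :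
    (univ.filter fun u : Fin t → Fin n =>
        u ⟨t - 1, hlt⟩ = x ∧ ∃ i, goodIdx G x u i).card
      = G.degree x * psi n (t - 1) := by
  classical
  set last : Fin t := ⟨t - 1, hlt⟩ with hlastdef
  have hlastval : (last : ℕ) = t - 1 := rfl
  set S : Fin t → Finset (Fin t → Fin n) := fun i =>
    Fintype.piFinset (fun j => if (j : ℕ) < (i : ℕ) then (univ : Finset (Fin n))
      else if j = i then G.neighborFinset x else {x}) with hSdef
  have hSmem : ∀ (i : Fin t) (u : Fin t → Fin n),
      u ∈ S i ↔ (∀ j, i < j → u j = x) ∧ G.Adj (u i) x := by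
    intro i u
    rw [hSdef]
    simp only [Fintype.mem_piFinset]
    constructor
    · intro h
      refine ⟨fun j hj => ?_, ?_⟩
      · have hjv := Fin.lt_def.mp hj
        have h1 : ¬ (j : ℕ) < (i : ℕ) := by omega
        have := h j
        rw [if_neg h1, if_neg (Fin.ne_of_gt hj)] at this
        simpa using this
      · have := h i
        rw [if_neg (lt_irrefl (i : ℕ)), if_pos rfl, SimpleGraph.mem_neighborFinset] at this
        exact this.symm
    · rintro ⟨h1, h2⟩ j
      rcases lt_trichotomy (j : ℕ) (i : ℕ) with hj | hj | hj
      · rw [if_pos hj]; exact Finset.mem_univ _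
      · have hji : j = i := Fin.ext hj
        subst hji
        rw [if_neg (lt_irrefl (j : ℕ)), if_pos rfl, SimpleGraph.mem_neighborFinset]
        exact h2.symm
      · have hne : j ≠ i := Fin.ne_of_gt (Fin.lt_def.mpr hj)
        rw [if_neg (by omega), if_neg hne]
        simp [h1 j (Fin.lt_def.mpr hj)]
  have hunion : (univ.filter fun u : Fin t → Fin n =>
        u last = x ∧ ∃ i, goodIdx G x u i)
      = (univ.filter fun i : Fin t => (i : ℕ) < t - 1).biUnion S := by
    ext u
    simp only [Finset.mem_filter, Finset.mem_univ, true_and, Finset.mem_biUnion]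
    constructor
    · rintro ⟨hx, i, hi⟩
      exact ⟨i, by simp [hi.1], (hSmem i u).mpr ⟨hi.2.1, hi.2.2⟩⟩
    · rintro ⟨i, hi, hu⟩
      have hi : (i : ℕ) < t - 1 := by simpa using hi
      rw [hSmem] at hu
      have hil : i < last := Fin.lt_def.mpr (by omega)
      exact ⟨hu.1 last hil, ⟨i, hi, hu.1, hu.2⟩⟩
  have hdisj : ∀ i ∈ (univ.filter fun i : Fin t => (i : ℕ) < t - 1),
      ∀ j ∈ (univ.filter fun i : Fin t => (i : ℕ) < t - 1), i ≠ j →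
      Disjoint (S i) (S j) := by
    intro i hi j hj hij
    simp only [Finset.mem_filter, Finset.mem_univ, true_and] at hi hj
    rw [Finset.disjoint_left]
    intro u hui huj
    rw [hSmem] at hui huj
    exact hij (goodIdx_unique G x ⟨hi, hui.1, hui.2⟩ ⟨hj, huj.1, huj.2⟩)
  have hScard : ∀ i : Fin t, (S i).card = G.degree x * n ^ (i : ℕ) := by
    intro i
    rw [hSdef]
    rw [Fintype.card_piFinset]
    have hc : ∀ j ∈ (univ : Finset (Fin t)),
        ((if (j : ℕ) < (i : ℕ) then (univ : Finset (Fin n))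
          else if j = i then G.neighborFinset x else {x}).card)
        = (fun k => if k < (i : ℕ) then n else if k = (i : ℕ) then G.degree x else 1)
            (j : ℕ) := by
      intro j _
      by_cases h1 : (j : ℕ) < (i : ℕ)
      · simp [h1]
      · by_cases h2 : j = i
        · subst h2
          simp [h1, SimpleGraph.card_neighborFinset_eq_degree]
        · have h3 : (j : ℕ) ≠ (i : ℕ) := fun h => h2 (Fin.ext h)
          simp [h1, h2, h3]
    rw [Finset.prod_congr rfl hc]
    rw [Fin.prod_univ_eq_prod_range
      (fun k => if k < (i : ℕ) then n else if k = (i : ℕ) then G.degree x else 1) t]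
    rw [← Finset.prod_range_mul_prod_Ico _ (show (i : ℕ) + 1 ≤ t by omega)]
    have e2 : (∏ k ∈ Finset.Ico ((i : ℕ) + 1) t,
        (if k < (i : ℕ) then n else if k = (i : ℕ) then G.degree x else 1)) = 1 := by
      refine Finset.prod_eq_one fun k hk => ?_
      rw [Finset.mem_Ico] at hk
      rw [if_neg (by omega), if_neg (by omega)]
    rw [e2, mul_one, Finset.prod_range_succ]
    rw [if_neg (lt_irrefl (i : ℕ)), if_pos rfl]
    have e1 : (∏ k ∈ Finset.range (i : ℕ),
        (if k < (i : ℕ) then n else if k = (i : ℕ) then G.degree x else 1)) = n ^ (i : ℕ) := by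
      rw [Finset.prod_congr rfl (fun k hk => if_pos (Finset.mem_range.mp hk))]
      rw [Finset.prod_const, Finset.card_range]
    rw [e1, mul_comm]
  rw [hunion, Finset.card_biUnion hdisj]
  rw [Finset.sum_congr rfl (fun i _ => hScard i)]
  rw [Finset.sum_filter]
  rw [Fin.sum_univ_eq_sum_range
    (fun k => if k < t - 1 then G.degree x * n ^ k else 0) t]
  rw [← Finset.sum_subset (Finset.range_subset_range.mpr (show t - 1 ≤ t by omega))
    (fun k _ hk' => if_neg (fun h => hk' (Finset.mem_range.mpr (by omega))))]
  rw [Finset.sum_congr rfl (fun k hk => if_pos (Finset.mem_range.mp hk))]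
  rw [psi, Finset.mul_sum]

end Aux

theorem sierpinski_vertex_degree_count {n : ℕ} (G : SimpleGraph (Fin n))
    [DecidableRel G.Adj] (x : Fin n) (t : ℕ) (ht : 2 ≤ t) :
    (Finset.univ.filter fun u : Fin t → Fin n =>
        u ⟨t - 1, by omega⟩ = x ∧ (sierpinskiGraph G t).degree u = G.degree x).card =
      n ^ (t - 1) - G.degree x * psi n (t - 1) ∧
    (Finset.univ.filter fun u : Fin t → Fin n =>
        u ⟨t - 1, by omega⟩ = x ∧ (sierpinskiGraph G t).degree u = G.degree x + 1).card =
      G.degree x * psi n (t - 1) := by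
  classical
  have hlt : t - 1 < t := by omega
  have hiff2 : ∀ u : Fin t → Fin n,
      (u ⟨t - 1, hlt⟩ = x ∧ (sierpinskiGraph G t).degree u = G.degree x + 1)
        ↔ (u ⟨t - 1, hlt⟩ = x ∧ ∃ i, goodIdx G x u i) := by
    intro u
    constructor
    · rintro ⟨h1, h2⟩
      refine ⟨h1, ?_⟩
      by_contra hP
      rw [sier_degree G x ht u h1, if_neg hP] at h2
      omega
    · rintro ⟨h1, hP⟩
      exact ⟨h1, by rw [sier_degree G x ht u h1, if_pos hP]⟩
  have hiff1 : ∀ u : Fin t → Fin n,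
      (u ⟨t - 1, hlt⟩ = x ∧ (sierpinskiGraph G t).degree u = G.degree x)
        ↔ (u ⟨t - 1, hlt⟩ = x ∧ ¬ ∃ i, goodIdx G x u i) := by
    intro u
    constructor
    · rintro ⟨h1, h2⟩
      refine ⟨h1, fun hP => ?_⟩
      rw [sier_degree G x ht u h1, if_pos hP] at h2
      omega
    · rintro ⟨h1, hP⟩
      exact ⟨h1, by rw [sier_degree G x ht u h1, if_neg hP, add_zero]⟩
  have r2 : (Finset.univ.filter fun u : Fin t → Fin n =>
        u ⟨t - 1, hlt⟩ = x ∧ (sierpinskiGraph G t).degree u = G.degree x + 1).card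
      = G.degree x * psi n (t - 1) := by
    rw [Finset.filter_congr (fun u _ => hiff2 u)]
    exact card_good G x ht hlt
  have r1 : (Finset.univ.filter fun u : Fin t → Fin n =>
        u ⟨t - 1, hlt⟩ = x ∧ (sierpinskiGraph G t).degree u = G.degree x).card
      = n ^ (t - 1) - G.degree x * psi n (t - 1) := by
    have hsum := Finset.card_filter_add_card_filter_not
      (s := Finset.univ.filter fun u : Fin t → Fin n => u ⟨t - 1, hlt⟩ = x)
      (fun u => ∃ i, goodIdx G x u i)
    rw [Finset.filter_filter, Finset.filter_filter, card_last x ht hlt,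
      card_good G x ht hlt] at hsum
    rw [Finset.filter_congr (fun u _ => hiff1 u)]
    exact (Nat.sub_eq_of_eq_add (by rw [← hsum, add_comm])).symm
  exact ⟨r1, r2⟩
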